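/- Let f : M → N be a morphism of Banach comodules over a K-Banach coalgebra C. Then (a) the preimage under f of any closed subcomodule of N is a closed subcomodule of M; in particular Ker(f) is a closed subcomodule; and (b) the closure of the image f(M) is a closed subcomodule of N. -/

import Mathlib

/-- An abstract model of the completed (projective) tensor product `V ⊗̂ W` of normed
spaces over a nonarchimedean field `K`: a Banach space `T` together with a continuous
bilinear map `tm` of norm `≤ 1` with dense span, satisfying the universal property of
the completed projective tensor product. -/
structure BTensor (K : Type) [NontriviallyNormedField K] (V W : Type)
    [NormedAddCommGroup V] [NormedSpace K V]
    [NormedAddCommGroup W] [NormedSpace K W] : Type 1 where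
  T : Type
  [grp : NormedAddCommGroup T]
  [mod : NormedSpace K T]
  [cpl : CompleteSpace T]
  tm : V →L[K] W →L[K] T
  tm_norm : ∀ v w, ‖tm v w‖ ≤ ‖v‖ * ‖w‖
  dense_span : Dense (Submodule.span K (Set.range fun p : V × W => (tm p.1) p.2) : Set T)
  lift : ∀ (Z : Type) [NormedAddCommGroup Z] [NormedSpace K Z] [CompleteSpace Z],
      (V →L[K] W →L[K] Z) → (T →L[K] Z)
  lift_tm : ∀ (Z : Type) [NormedAddCommGroup Z] [NormedSpace K Z] [CompleteSpace Z]
      (b : V →L[K] W →L[K] Z) (v : V) (w : W), lift Z b (tm v w) = b v w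
  lift_norm : ∀ (Z : Type) [NormedAddCommGroup Z] [NormedSpace K Z] [CompleteSpace Z]
      (b : V →L[K] W →L[K] Z), ‖lift Z b‖ ≤ ‖b‖

attribute [instance] BTensor.grp BTensor.mod BTensor.cpl

/-- `K` is discretely valued: the value group of `K` is generated by a uniformizer. -/
def DiscretelyValued (K : Type) [NontriviallyNormedField K] : Prop :=
  ∃ π : K, 0 < ‖π‖ ∧ ‖π‖ < 1 ∧ ∀ x : K, x ≠ 0 → ∃ n : ℤ, ‖x‖ = ‖π‖ ^ n

variable {K : Type} [NontriviallyNormedField K] [CompleteSpace K]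

/-- the map `(ε ⊗̄ id) : C ⊗̂ C → C`. -/
noncomputable def BTensor.counitL {C : Type} [NormedAddCommGroup C] [NormedSpace K C]
    [CompleteSpace C] (t : BTensor K C C) (ε : C →L[K] K) : t.T →L[K] C :=
  t.lift C ((ContinuousLinearMap.lsmul K K : K →L[K] C →L[K] C).comp ε)

/-- the map `(id ⊗̄ ε) : C ⊗̂ C → C`. -/
noncomputable def BTensor.counitR {C : Type} [NormedAddCommGroup C] [NormedSpace K C]
    [CompleteSpace C] (t : BTensor K C C) (ε : C →L[K] K) : t.T →L[K] C :=
  t.lift C (((ContinuousLinearMap.lsmul K K : K →L[K] C →L[K] C).comp ε).flip)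

/-- the map `(id_M ⊗̄ λ) : M ⊗̂ C → M` used to define the induced `C'`-module structure
`λ · m = (id_M ⊗̄ λ)(ρ_M m)` on a Banach comodule `M`. -/
noncomputable def BTensor.act {M C : Type} [NormedAddCommGroup M] [NormedSpace K M]
    [CompleteSpace M] [NormedAddCommGroup C] [NormedSpace K C]
    (tM : BTensor K M C) (lam : C →L[K] K) : tM.T →L[K] M :=
  tM.lift M (((ContinuousLinearMap.lsmul K K : K →L[K] M →L[K] M).comp lam).flip)

/-- the closed subspace `N ⊗̂ C` of `M ⊗̂ C` (closure of the span of elementary tensors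
with first factor in `N`). -/
def BTensor.subTensor {M C : Type} [NormedAddCommGroup M] [NormedSpace K M]
    [NormedAddCommGroup C] [NormedSpace K C]
    (tM : BTensor K M C) (N : Submodule K M) : Set tM.T :=
  closure (Submodule.span K {z : tM.T | ∃ n ∈ N, ∃ c : C, z = tM.tm n c} : Set tM.T)


open Filter Topology

section HelperHB

variable {Cu : Type} [NormedAddCommGroup Cu] [NormedSpace K Cu] [IsUltrametricDist Cu]

lemma exists_least_zpow {π : K} (hπ0 : 0 < ‖π‖) (hπ1 : ‖π‖ < 1) {r : ℝ} (hr : 0 < r) :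
    ∃ n : ℤ, ‖π‖ ^ n ≤ r ∧ ∀ m : ℤ, ‖π‖ ^ m ≤ r → n ≤ m := by
  have hne : ∃ n : ℤ, ‖π‖ ^ n ≤ r := by
    obtain ⟨n, hn⟩ := exists_pow_lt_of_lt_one hr hπ1
    exact ⟨n, by rw [zpow_natCast]; exact hn.le⟩
  have hbdd : ∃ b : ℤ, ∀ z : ℤ, ‖π‖ ^ z ≤ r → b ≤ z := by
    obtain ⟨N, hN⟩ := exists_pow_lt_of_lt_one (inv_pos.2 hr) hπ1
    refine ⟨-(N : ℤ), fun z hz => ?_⟩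
    by_contra h
    push_neg at h
    have h1 : ‖π‖ ^ (-(N : ℤ)) < ‖π‖ ^ z := zpow_lt_zpow_right_of_lt_one₀ hπ0 hπ1 h
    have h2 : r < ‖π‖ ^ (-(N : ℤ)) := by
      rw [zpow_neg, zpow_natCast, lt_inv_comm₀ hr (by positivity)]
      exact hN
    linarith
  obtain ⟨lb, h1, h2⟩ := Int.exists_least_of_bdd hbdd hne
  exact ⟨lb, h1, h2⟩
lemma exists_extension_step (hdv : DiscretelyValued K) {B : ℝ} (hB : 0 < B)
    (p : Cu →ₗ.[K] K) (hp : ∀ x : p.domain, ‖p x‖ ≤ B * ‖(x : Cu)‖)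
    {c : Cu} (hc : c ∉ p.domain) :
    ∃ t : K, ∀ w : p.domain, ‖p w - t‖ ≤ B * ‖(w : Cu) - c‖ := by
  have hwne : ∀ w : p.domain, 0 < ‖(w : Cu) - c‖ := by
    intro w
    rw [norm_pos_iff, sub_ne_zero]
    exact fun h => hc (h ▸ w.2)
  have hsub : ∀ w w' : p.domain, ‖p w - p w'‖ ≤ B * ‖(w : Cu) - (w' : Cu)‖ := by
    intro w w'
    have := hp (w - w')
    rwa [LinearPMap.map_sub, Submodule.coe_sub] at this
  have hmax : ∀ w w' : p.domain,
      ‖(w : Cu) - (w' : Cu)‖ ≤ max ‖(w : Cu) - c‖ ‖(w' : Cu) - c‖ := by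
    intro w w'
    have h : (w : Cu) - (w' : Cu) = ((w : Cu) - c) - ((w' : Cu) - c) := by abel
    rw [h, sub_eq_add_neg]
    refine (IsUltrametricDist.norm_add_le_max _ _).trans ?_
    rw [norm_neg]
  by_cases hcl : c ∈ closure (p.domain : Set Cu)
  · -- c is in the closure of the domain: take a limit
    obtain ⟨x, hx, hxc⟩ := mem_closure_iff_seq_limit.1 hcl
    set u : ℕ → K := fun n => p ⟨x n, hx n⟩ with hu
    have hxC : CauchySeq x := hxc.cauchySeq
    have huC : CauchySeq u := by
      rw [Metric.cauchySeq_iff] at hxC ⊢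
      intro ε hε
      obtain ⟨N, hN⟩ := hxC (ε / B) (div_pos hε hB)
      refine ⟨N, fun m hm n hn => ?_⟩
      have h1 := hsub ⟨x m, hx m⟩ ⟨x n, hx n⟩
      have h2 := hN m hm n hn
      rw [dist_eq_norm] at h2 ⊢
      calc ‖u m - u n‖ ≤ B * ‖x m - x n‖ := h1
        _ < B * (ε / B) := by
            exact mul_lt_mul_of_pos_left h2 hB
        _ = ε := by field_simp
    obtain ⟨t, ht⟩ := cauchySeq_tendsto_of_complete huC
    refine ⟨t, fun w => ?_⟩
    have h1 : Tendsto (fun n => ‖p w - u n‖) atTop (𝓝 ‖p w - t‖) :=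
      (tendsto_const_nhds.sub ht).norm
    apply le_of_tendsto h1
    have h2 : Tendsto (fun n => ‖x n - c‖) atTop (𝓝 0) := by
      have h := ((hxc.sub (tendsto_const_nhds (x := c))).norm)
      simpa using h
    filter_upwards [h2.eventually_lt_const (hwne w)] with n hn
    have h3 := hsub w ⟨x n, hx n⟩
    refine h3.trans ?_
    apply mul_le_mul_of_nonneg_left _ hB.le
    refine (hmax w ⟨x n, hx n⟩).trans ?_
    exact max_le le_rfl hn.le
  · -- the distance from c to the domain is bounded below
    have hd : ∃ d > 0, ∀ w : p.domain, d ≤ ‖(w : Cu) - c‖ := by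
      rw [Metric.mem_closure_iff] at hcl
      push_neg at hcl
      obtain ⟨ε, hε, h⟩ := hcl
      refine ⟨ε, hε, fun w => ?_⟩
      have := h (w : Cu) w.2
      rwa [dist_comm, dist_eq_norm] at this
    obtain ⟨d, hd0, hdle⟩ := hd
    obtain ⟨π, hπ0, hπ1, hval⟩ := hdv
    set P : ℤ → Prop := fun n => ∃ w : p.domain,
      ‖π‖ ^ n ≤ B * ‖(w : Cu) - c‖ ∧ ∀ m : ℤ, ‖π‖ ^ m ≤ B * ‖(w : Cu) - c‖ → n ≤ m with hP
    have hinh : ∃ n, P n := by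
      obtain ⟨n, h1, h2⟩ := exists_least_zpow hπ0 hπ1 (mul_pos hB (hwne 0))
      exact ⟨n, 0, h1, h2⟩
    have hbdd : ∃ b : ℤ, ∀ z, P z → z ≤ b := by
      obtain ⟨m₁, hm₁, _⟩ := exists_least_zpow hπ0 hπ1 (mul_pos hB hd0)
      refine ⟨m₁, fun z hz => ?_⟩
      obtain ⟨w, h1, h2⟩ := hz
      exact h2 m₁ (hm₁.trans (mul_le_mul_of_nonneg_left (hdle w) hB.le))
    obtain ⟨nstar, ⟨wstar, hw1, hw2⟩, hmaxP⟩ := Int.exists_greatest_of_bdd hbdd hinh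
    refine ⟨p wstar, fun w => ?_⟩
    have hA : ‖p w - p wstar‖ ≤ max (B * ‖(w : Cu) - c‖) (B * ‖(wstar : Cu) - c‖) := by
      refine (hsub w wstar).trans ?_
      rw [← mul_max_of_nonneg _ _ hB.le]
      exact mul_le_mul_of_nonneg_left (hmax w wstar) hB.le
    rcases le_or_gt ‖p w - p wstar‖ (B * ‖(w : Cu) - c‖) with h | h
    · exact h
    · exfalso
      have hA2 : ‖p w - p wstar‖ ≤ B * ‖(wstar : Cu) - c‖ := by
        rcases max_cases (B * ‖(w : Cu) - c‖) (B * ‖(wstar : Cu) - c‖) with ⟨he, _⟩ | ⟨he, _⟩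
        · rw [he] at hA; exact absurd hA (not_le.2 h)
        · rwa [he] at hA
      have hpos' : 0 < B * ‖(w : Cu) - c‖ := mul_pos hB (hwne w)
      have hne0 : p w - p wstar ≠ 0 := by
        intro h0
        rw [h0, norm_zero] at h
        exact absurd h (not_lt.2 hpos'.le)
      obtain ⟨m, hm⟩ := hval _ hne0
      have h5 : nstar ≤ m := hw2 m (by rw [← hm]; exact hA2)
      obtain ⟨nw, hnw1, hnw2⟩ := exists_least_zpow hπ0 hπ1 hpos'
      have h6 : nw ≤ nstar := hmaxP nw ⟨w, hnw1, hnw2⟩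
      have h7 : ‖π‖ ^ m ≤ ‖π‖ ^ nw :=
        (zpow_right_strictAnti₀ hπ0 hπ1).antitone (h6.trans h5)
      rw [hm] at h
      exact absurd (h7.trans hnw1) (not_le.2 h)


lemma exists_extension_top (hdv : DiscretelyValued K) {B : ℝ} (hB : 0 < B)
    (p₀ : Cu →ₗ.[K] K) (hp₀ : ∀ x : p₀.domain, ‖p₀ x‖ ≤ B * ‖(x : Cu)‖) :
    ∃ lam : Cu →L[K] K, (∀ x : p₀.domain, lam x = p₀ x) ∧ ∀ x : Cu, ‖lam x‖ ≤ B * ‖x‖ := by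
  set S : Set (Cu →ₗ.[K] K) := {p | ∀ x : p.domain, ‖p x‖ ≤ B * ‖(x : Cu)‖} with hS
  have key : ∀ c ⊆ S, IsChain (· ≤ ·) c → ∀ y ∈ c, ∃ ub ∈ S, ∀ z ∈ c, z ≤ ub := by
    intro c hcS hchain y hy
    have hdir : DirectedOn (· ≤ ·) c := hchain.directedOn
    refine ⟨LinearPMap.sSup c hdir, ?_, fun z hz => LinearPMap.le_sSup hdir hz⟩
    intro x
    have hx : (x : Cu) ∈ sSup (LinearPMap.domain '' c) := x.2
    have hdir2 : DirectedOn (· ≤ ·) (LinearPMap.domain '' c) := by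
      rintro _ ⟨p1, hp1, rfl⟩ _ ⟨p2, hp2, rfl⟩
      obtain ⟨r, hr, h1, h2⟩ := hdir p1 hp1 p2 hp2
      exact ⟨r.domain, ⟨r, hr, rfl⟩, h1.1, h2.1⟩
    rw [Submodule.mem_sSup_of_directed (Set.image_nonempty.2 ⟨y, hy⟩) hdir2] at hx
    obtain ⟨d, ⟨q, hq, rfl⟩, hxq⟩ := hx
    have heq : (LinearPMap.sSup c hdir) x = q ⟨(x : Cu), hxq⟩ :=
      LinearPMap.sSup_apply hdir hq ⟨(x : Cu), hxq⟩
    rw [heq]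
    exact hcS hq ⟨(x : Cu), hxq⟩
  obtain ⟨m, hp₀m, hmS, hmax⟩ := zorn_le_nonempty₀ S key p₀ hp₀
  -- maximal element has full domain
  have hdom : m.domain = ⊤ := by
    by_contra hne
    obtain ⟨c', hc'⟩ : ∃ c', c' ∉ m.domain := by
      by_contra h
      push_neg at h
      exact hne (Submodule.eq_top_iff'.2 h)
    obtain ⟨t, ht⟩ := exists_extension_step hdv hB m hmS hc'
    set q := m.supSpanSingleton c' t hc' with hqdef
    have hmq : m ≤ q := by
      show m ≤ m.supSpanSingleton c' t hc'
      unfold LinearPMap.supSpanSingleton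
      exact LinearPMap.left_le_sup _ _ _
    have hqS : q ∈ S := by
      intro x
      have hx : (x : Cu) ∈ m.domain ⊔ (K ∙ c') := x.2
      rw [Submodule.mem_sup] at hx
      obtain ⟨v, hv, z, hz, hvz⟩ := hx
      obtain ⟨a, rfl⟩ := Submodule.mem_span_singleton.1 hz
      have happ : q x = m ⟨v, hv⟩ + a • t := by
        have hxeq : x = ⟨v + a • c', hvz ▸ x.2⟩ := Subtype.ext hvz.symm
        rw [hxeq]
        exact m.supSpanSingleton_apply_mk c' t hc' v hv a
      have hnx : ‖(x : Cu)‖ = ‖v + a • c'‖ := by rw [← hvz]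
      rw [happ, hnx]
      show ‖m ⟨v, hv⟩ + a • t‖ ≤ B * ‖v + a • c'‖
      rcases eq_or_ne a 0 with rfl | ha
      · simpa using hmS ⟨v, hv⟩
      · set w : m.domain := (-a⁻¹) • (⟨v, hv⟩ : m.domain) with hwdef
        have hwc : (w : Cu) = (-a⁻¹) • v := rfl
        have h1 : ‖m w - t‖ ≤ B * ‖(w : Cu) - c'‖ := ht w
        have h2 : a • ((m w : K) - t) = -(m ⟨v, hv⟩ + a • t) := by
          rw [hwdef, LinearPMap.map_smul]
          simp only [smul_eq_mul]
          field_simp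
          ring
        have h3 : a • ((w : Cu) - c') = -(v + a • c') := by
          rw [hwc, smul_sub, smul_smul, mul_neg, mul_inv_cancel₀ ha, neg_one_smul]
          abel
        calc ‖m ⟨v, hv⟩ + a • t‖ = ‖a • ((m w : K) - t)‖ := by rw [h2, norm_neg]
          _ = ‖a‖ * ‖(m w : K) - t‖ := by rw [norm_smul]
          _ ≤ ‖a‖ * (B * ‖(w : Cu) - c'‖) :=
              mul_le_mul_of_nonneg_left h1 (norm_nonneg a)
          _ = B * ‖a • ((w : Cu) - c')‖ := by rw [norm_smul]; ring
          _ = B * ‖v + a • c'‖ := by rw [h3, norm_neg]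
    have : q ≤ m := hmax hqS hmq
    have hcq : c' ∈ q.domain :=
      Submodule.mem_sup_right (Submodule.mem_span_singleton_self c')
    exact hc' (this.1 hcq)
  -- build the continuous linear map
  have hmem : ∀ x : Cu, x ∈ m.domain := fun x => hdom ▸ Submodule.mem_top
  set l : Cu →ₗ[K] K :=
    { toFun := fun x => m ⟨x, hmem x⟩
      map_add' := fun x y => by rw [← LinearPMap.map_add]; rfl
      map_smul' := fun a x => by rw [← LinearPMap.map_smul]; rfl } with hl
  have hlb : ∀ x : Cu, ‖l x‖ ≤ B * ‖x‖ := fun x => hmS ⟨x, hmem x⟩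
  refine ⟨l.mkContinuous B hlb, fun x => ?_, fun x => by
    rw [LinearMap.mkContinuous_apply]; exact hlb x⟩
  rw [LinearMap.mkContinuous_apply]
  show m ⟨(x : Cu), hmem _⟩ = p₀ x
  exact (hp₀m.2 (x := x) (y := ⟨(x : Cu), hmem _⟩) rfl).symm

lemma exists_dual_functional (hdv : DiscretelyValued K) {e : Cu} (he : e ≠ 0) :
    ∃ lam : Cu →L[K] K, lam e = 1 ∧ ∀ x : Cu, ‖lam x‖ * ‖e‖ ≤ ‖x‖ := by
  set p₀ : Cu →ₗ.[K] K := LinearPMap.mkSpanSingleton e 1 he with hp₀def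
  have hB : 0 < ‖e‖⁻¹ := inv_pos.2 (norm_pos_iff.2 he)
  have hp₀ : ∀ x : p₀.domain, ‖p₀ x‖ ≤ ‖e‖⁻¹ * ‖(x : Cu)‖ := by
    intro x
    obtain ⟨a, ha⟩ := Submodule.mem_span_singleton.1 x.2
    have hxeq : x = ⟨a • e, Submodule.mem_span_singleton.2 ⟨a, rfl⟩⟩ := Subtype.ext ha.symm
    rw [hxeq]
    erw [LinearPMap.mkSpanSingleton'_apply]
    rw [smul_eq_mul, mul_one, norm_smul]
    have hee : ‖e‖ ≠ 0 := norm_ne_zero_iff.2 he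
    have heq2 : ‖e‖⁻¹ * (‖a‖ * ‖e‖) = ‖a‖ := by field_simp
    rw [heq2]
    exact le_rfl
  obtain ⟨lam, hag, hbound⟩ := exists_extension_top hdv hB p₀ hp₀
  refine ⟨lam, ?_, fun x => ?_⟩
  · have he' : e ∈ p₀.domain := Submodule.mem_span_singleton_self e
    have h2 := hag ⟨e, he'⟩
    rw [h2]
    exact LinearPMap.mkSpanSingleton_apply K K he 1
  · have h := hbound x
    have hee : (0:ℝ) < ‖e‖ := norm_pos_iff.2 he
    calc ‖lam x‖ * ‖e‖ ≤ (‖e‖⁻¹ * ‖x‖) * ‖e‖ :=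
          mul_le_mul_of_nonneg_right h hee.le
      _ = ‖x‖ := by field_simp


lemma list_sum_clm_apply {E F : Type*} [NormedAddCommGroup E] [NormedSpace K E]
    [NormedAddCommGroup F] [NormedSpace K F] (L : List (E →L[K] F)) (x : E) :
    L.sum x = (L.map fun f => f x).sum := by
  induction L with
  | nil => simp
  | cons f tl ih => simp [ih]

lemma exists_finite_rank_approx (hdv : DiscretelyValued K)
    (l : List Cu) {δ : ℝ} (hδ : 0 < δ) :
    ∃ L : List ((Cu →L[K] K) × Cu),
      (∀ x : Cu, ‖(L.map fun pr => pr.1.smulRight pr.2).sum x‖ ≤ ‖x‖) ∧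
      (∀ c ∈ l, ‖(L.map fun pr => pr.1.smulRight pr.2).sum c - c‖ ≤ δ) := by
  induction l with
  | nil => exact ⟨[], by simp, by simp⟩
  | cons c tl ih =>
    obtain ⟨L', h1, h2⟩ := ih
    set Φ' : Cu →L[K] Cu := (L'.map fun pr => pr.1.smulRight pr.2).sum with hΦ'
    rcases le_or_gt ‖Φ' c - c‖ δ with hle | hlt
    · refine ⟨L', h1, fun c'' hc'' => ?_⟩
      rcases List.mem_cons.1 hc'' with rfl | h
      · exact hle
      · exact h2 c'' h
    · have he : c - Φ' c ≠ 0 := by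
        rw [sub_ne_zero]
        intro h0
        rw [← h0, sub_self, norm_zero] at hlt
        exact absurd hlt (not_lt.2 hδ.le)
      obtain ⟨lam0, hlam1, hlam2⟩ := exists_dual_functional hdv he
      set μ : Cu →L[K] K := lam0.comp (ContinuousLinearMap.id K Cu - Φ') with hμ
      have hμval : ∀ x : Cu, μ x = lam0 (x - Φ' x) := fun x => rfl
      refine ⟨(μ, c - Φ' c) :: L', fun x => ?_, fun c'' hc'' => ?_⟩
      · rw [List.map_cons, List.sum_cons, ContinuousLinearMap.add_apply,
          ContinuousLinearMap.smulRight_apply, hμval]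
        refine (IsUltrametricDist.norm_add_le_max _ _).trans (max_le ?_ (h1 x))
        rw [norm_smul]
        refine (hlam2 _).trans ?_
        rw [sub_eq_add_neg]
        refine (IsUltrametricDist.norm_add_le_max _ _).trans ?_
        rw [norm_neg]
        exact max_le le_rfl (h1 x)
      · rw [List.map_cons, List.sum_cons, ContinuousLinearMap.add_apply,
          ContinuousLinearMap.smulRight_apply, hμval]
        rcases List.mem_cons.1 hc'' with rfl | h
        · rw [hlam1, one_smul]
          have : c'' - Φ' c'' + Φ' c'' - c'' = 0 := by abel
          rw [add_sub_assoc] at this ⊢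
          rw [this, norm_zero]
          exact hδ.le
        · have hsplit : lam0 (c'' - Φ' c'') • (c - Φ' c) + Φ' c'' - c''
              = lam0 (c'' - Φ' c'') • (c - Φ' c) + (Φ' c'' - c'') := by abel
          rw [hsplit]
          refine (IsUltrametricDist.norm_add_le_max _ _).trans (max_le ?_ (h2 c'' h))
          rw [norm_smul]
          refine (hlam2 _).trans ?_
          rw [norm_sub_rev]
          exact h2 c'' h
      

end HelperHB

section HelperTensor

variable {V W : Type} [NormedAddCommGroup V] [NormedSpace K V]
  [NormedAddCommGroup W] [NormedSpace K W]

lemma BTensor.ext_clm (t : BTensor K V W) {Z : Type} [NormedAddCommGroup Z]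
    [NormedSpace K Z] (g h : t.T →L[K] Z)
    (H : ∀ v w, g (t.tm v w) = h (t.tm v w)) : g = h := by
  have hsub : Submodule.span K (Set.range fun p : V × W => t.tm p.1 p.2) ≤
      LinearMap.ker ((g - h : t.T →L[K] Z) : t.T →ₗ[K] Z) := by
    rw [Submodule.span_le]
    rintro _ ⟨p, rfl⟩
    simp only [SetLike.mem_coe, LinearMap.mem_ker, ContinuousLinearMap.coe_coe,
      ContinuousLinearMap.sub_apply, sub_eq_zero]
    exact H p.1 p.2
  have heqon : Set.EqOn ⇑g ⇑h
      ((Submodule.span K (Set.range fun p : V × W => t.tm p.1 p.2) : Submodule K t.T) :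
        Set t.T) := by
    intro x hx
    have h2 := hsub hx
    simp only [LinearMap.mem_ker, ContinuousLinearMap.coe_coe,
      ContinuousLinearMap.sub_apply, sub_eq_zero] at h2
    exact h2
  have hfun := Continuous.ext_on t.dense_span g.continuous h.continuous heqon
  ext x
  exact congrFun hfun x

lemma BTensor.mem_all (t : BTensor K V W) (S : Submodule K t.T)
    (hcl : IsClosed (S : Set t.T)) (H : ∀ v w, t.tm v w ∈ S) (z : t.T) : z ∈ S := by
  have h1 : Submodule.span K (Set.range fun p : V × W => t.tm p.1 p.2) ≤ S := by
    rw [Submodule.span_le]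
    rintro _ ⟨p, rfl⟩
    exact H p.1 p.2
  exact (closure_minimal (SetLike.coe_subset_coe.2 h1) hcl) (t.dense_span z)

lemma BTensor.tm_smul_left (t : BTensor K V W) (a : K) (v : V) (w : W) :
    t.tm (a • v) w = a • t.tm v w := by
  rw [map_smul]
  rfl

lemma BTensor.exists_list_of_mem_span (t : BTensor K V W) {u : t.T}
    (hu : u ∈ Submodule.span K (Set.range fun p : V × W => t.tm p.1 p.2)) :
    ∃ l : List (V × W), u = (l.map fun p => t.tm p.1 p.2).sum := by
  induction hu using Submodule.span_induction with
  | mem x hx =>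
      obtain ⟨p, rfl⟩ := hx
      exact ⟨[p], by simp⟩
  | zero => exact ⟨[], by simp⟩
  | add x y hx hy ihx ihy =>
      obtain ⟨l1, rfl⟩ := ihx
      obtain ⟨l2, rfl⟩ := ihy
      exact ⟨l1 ++ l2, by simp⟩
  | smul a x hx ih =>
      obtain ⟨l, rfl⟩ := ih
      refine ⟨l.map fun p => (a • p.1, p.2), ?_⟩
      rw [List.smul_sum, List.map_map, List.map_map]
      refine congrArg List.sum (List.map_congr_left fun p _ => ?_)
      exact (t.tm_smul_left a p.1 p.2).symm

lemma norm_list_map_sub_le {α E : Type*} [NormedAddCommGroup E] (l : List α) (F G : α → E) :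
    ‖(l.map F).sum - (l.map G).sum‖ ≤ (l.map fun a => ‖F a - G a‖).sum := by
  induction l with
  | nil => simp
  | cons a tl ih =>
    simp only [List.map_cons, List.sum_cons]
    have h : F a + (tl.map F).sum - (G a + (tl.map G).sum)
        = (F a - G a) + ((tl.map F).sum - (tl.map G).sum) := by abel
    rw [h]
    exact (norm_add_le _ _).trans (add_le_add le_rfl ih)

lemma list_sum_map_mul_right {α : Type*} (l : List α) (F : α → ℝ) (c : ℝ) :
    (l.map fun a => F a * c).sum = (l.map F).sum * c := by
  induction l with
  | nil => simp
  | cons a tl ih => simp [ih, add_mul]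

end HelperTensor

section HelperAct

lemma BTensor.act_tm {M C : Type} [NormedAddCommGroup M] [NormedSpace K M]
    [CompleteSpace M] [NormedAddCommGroup C] [NormedSpace K C]
    (tM : BTensor K M C) (lam : C →L[K] K) (m : M) (c : C) :
    tM.act lam (tM.tm m c) = lam c • m := by
  show tM.lift M (((ContinuousLinearMap.lsmul K K : K →L[K] M →L[K] M).comp lam).flip)
      (tM.tm m c) = lam c • m
  rw [tM.lift_tm]
  rfl

end HelperAct
/-- Let `f : M → N` be a morphism of Banach comodules over a `K`-Banach
coalgebra `C`.  Then (a) the preimage under `f` of any closed subcomodule of `N` is a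
closed subcomodule of `M` (in particular `Ker f` is a closed subcomodule), and (b) the
closure of the image `f(M)` is a closed subcomodule of `N`. -/
theorem comodule_morphism_preimage_and_image
    [IsUltrametricDist K] (hdv : DiscretelyValued K)
    (C : Type) [NormedAddCommGroup C] [NormedSpace K C] [CompleteSpace C]
    [IsUltrametricDist C]
    (M : Type) [NormedAddCommGroup M] [NormedSpace K M] [CompleteSpace M]
    [IsUltrametricDist M]
    (N : Type) [NormedAddCommGroup N] [NormedSpace K N] [CompleteSpace N]
    [IsUltrametricDist N]
    -- the coalgebra `C`
    (t : BTensor K C C) (Δ : C →L[K] t.T) (ε : C →L[K] K)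
    (hcounitL : (t.counitL ε).comp Δ = ContinuousLinearMap.id K C)
    (hcounitR : (t.counitR ε).comp Δ = ContinuousLinearMap.id K C)
    -- the comodules `M` and `N`
    (tM : BTensor K M C) (ρM : M →L[K] tM.T)
    (hMcounit : (tM.act ε).comp ρM = ContinuousLinearMap.id K M)
    (tN : BTensor K N C) (ρN : N →L[K] tN.T)
    (hNcounit : (tN.act ε).comp ρN = ContinuousLinearMap.id K N)
    -- `f` is a comodule morphism: `(f ⊗̂ id_C) ∘ ρ_M = ρ_N ∘ f`
    (f : M →L[K] N)
    (hf : (tM.lift tN.T (tN.tm.comp f)).comp ρM = ρN.comp f) :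
    -- (a) preimages of closed subcomodules are closed subcomodules
    (∀ L : Submodule K N, IsClosed (L : Set N) → (∀ y ∈ L, ρN y ∈ tN.subTensor L) →
      IsClosed ((L.comap (f : M →ₗ[K] N) : Submodule K M) : Set M) ∧
      ∀ x ∈ L.comap (f : M →ₗ[K] N), ρM x ∈ tM.subTensor (L.comap (f : M →ₗ[K] N))) ∧
    -- in particular the kernel of `f` is a closed subcomodule
    (IsClosed ((LinearMap.ker (f : M →ₗ[K] N) : Submodule K M) : Set M) ∧
      ∀ x ∈ LinearMap.ker (f : M →ₗ[K] N), ρM x ∈ tM.subTensor (LinearMap.ker (f : M →ₗ[K] N))) ∧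
    -- (b) the closure of the image of `f` is a closed subcomodule
    (∀ y ∈ (LinearMap.range (f : M →ₗ[K] N)).topologicalClosure, ρN y ∈
      tN.subTensor (LinearMap.range (f : M →ₗ[K] N)).topologicalClosure) := by
  classical
  have hg_tm : ∀ (m : M) (c : C),
      (tM.lift tN.T (tN.tm.comp f)) (tM.tm m c) = tN.tm (f m) c := by
    intro m c
    rw [tM.lift_tm]
    rfl
  have hgρ : ∀ x : M, (tM.lift tN.T (tN.tm.comp f)) (ρM x) = ρN (f x) := by
    intro x
    have h := ContinuousLinearMap.ext_iff.1 hf x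
    simpa using h
  have act_mem : ∀ (L : Submodule K N), IsClosed (L : Set N) → ∀ (lam : C →L[K] K) (z : tN.T),
      z ∈ tN.subTensor L → tN.act lam z ∈ L := by
    intro L hLc lam z hz
    have hsub : Submodule.span K {w : tN.T | ∃ n ∈ L, ∃ c : C, w = tN.tm n c} ≤
        Submodule.comap ((tN.act lam) : tN.T →ₗ[K] N) L := by
      rw [Submodule.span_le]
      rintro _ ⟨n, hn, c, rfl⟩
      simp only [SetLike.mem_coe, Submodule.mem_comap, ContinuousLinearMap.coe_coe]
      rw [tN.act_tm]
      exact L.smul_mem _ hn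
    have hcl2 : IsClosed ((Submodule.comap ((tN.act lam) : tN.T →ₗ[K] N) L :
        Submodule K tN.T) : Set tN.T) := hLc.preimage (tN.act lam).continuous
    exact hcl2.closure_subset ((closure_mono (SetLike.coe_subset_coe.2 hsub)) hz)
  have parta : ∀ L : Submodule K N, IsClosed (L : Set N) → (∀ y ∈ L, ρN y ∈ tN.subTensor L) →
      IsClosed ((L.comap (f : M →ₗ[K] N) : Submodule K M) : Set M) ∧
      ∀ x ∈ L.comap (f : M →ₗ[K] N), ρM x ∈ tM.subTensor (L.comap (f : M →ₗ[K] N)) := by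
    intro L hLc hLco
    have hclosed : IsClosed ((L.comap (f : M →ₗ[K] N) : Submodule K M) : Set M) := by
      have hseteq : ((L.comap (f : M →ₗ[K] N) : Submodule K M) : Set M)
          = ⇑f ⁻¹' (L : Set N) := rfl
      rw [hseteq]
      exact hLc.preimage f.continuous
    refine ⟨hclosed, ?_⟩
    intro x hx
    have hfx : f x ∈ L := hx
    have hslice : ∀ lam : C →L[K] K, tM.act lam (ρM x) ∈ L.comap (f : M →ₗ[K] N) := by
      intro lam
      have hcomm : f.comp (tM.act lam) = (tN.act lam).comp (tM.lift tN.T (tN.tm.comp f)) :=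
        tM.ext_clm _ _ (fun m c => by
          rw [ContinuousLinearMap.comp_apply, ContinuousLinearMap.comp_apply,
            tM.act_tm, hg_tm, tN.act_tm, map_smul])
      have h1 : f (tM.act lam (ρM x)) = tN.act lam (ρN (f x)) := by
        have h2 := ContinuousLinearMap.ext_iff.1 hcomm (ρM x)
        rw [ContinuousLinearMap.comp_apply, ContinuousLinearMap.comp_apply, hgρ x] at h2
        exact h2
      have h3 : f (tM.act lam (ρM x)) ∈ L := by
        rw [h1]
        exact act_mem L hLc lam _ (hLco (f x) hfx)
      exact h3
    show ρM x ∈ closure ((Submodule.span K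
        {w : tM.T | ∃ n ∈ L.comap (f : M →ₗ[K] N), ∃ c : C, w = tM.tm n c} :
        Submodule K tM.T) : Set tM.T)
    rw [Metric.mem_closure_iff]
    intro r hr
    have hr3 : 0 < r / 3 := by linarith
    obtain ⟨u, hu_mem, hu_dist⟩ := Metric.mem_closure_iff.1 (tM.dense_span (ρM x)) (r / 3) hr3
    rw [SetLike.mem_coe] at hu_mem
    obtain ⟨l, hul⟩ := tM.exists_list_of_mem_span hu_mem
    set S1 : ℝ := (l.map fun p => ‖p.1‖).sum with hS1def
    have hS1 : 0 ≤ S1 := List.sum_nonneg (by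
      intro a ha
      obtain ⟨p, _, rfl⟩ := List.mem_map.1 ha
      exact norm_nonneg _)
    have h1S : (0 : ℝ) < 1 + S1 := by linarith
    set δ : ℝ := r / (3 * (1 + S1)) with hδdef
    have hδ : 0 < δ := div_pos hr (by positivity)
    obtain ⟨L₁, hΦ1, hΦ2⟩ := exists_finite_rank_approx hdv (l.map Prod.snd) hδ
    set Φ : C →L[K] C := (L₁.map fun pr => pr.1.smulRight pr.2).sum with hΦdef
    set bb : M →L[K] C →L[K] tM.T := ((tM.tm.flip).comp Φ).flip with hbbdef
    set lΦ : tM.T →L[K] tM.T := tM.lift tM.T bb with hlΦdef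
    have hlΦ_tm : ∀ (m : M) (c : C), lΦ (tM.tm m c) = tM.tm m (Φ c) := by
      intro m c
      rw [hlΦdef, tM.lift_tm]
      rfl
    have hlΦnorm : ∀ zz : tM.T, ‖lΦ zz‖ ≤ ‖zz‖ := by
      intro zz
      have hbb : ‖bb‖ ≤ 1 := by
        refine ContinuousLinearMap.opNorm_le_bound _ zero_le_one (fun m => ?_)
        rw [one_mul]
        refine ContinuousLinearMap.opNorm_le_bound _ (norm_nonneg m) (fun c => ?_)
        have hv : bb m c = tM.tm m (Φ c) := rfl
        rw [hv]
        exact (tM.tm_norm m (Φ c)).trans (mul_le_mul_of_nonneg_left (hΦ1 c) (norm_nonneg m))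
      calc ‖lΦ zz‖ ≤ ‖lΦ‖ * ‖zz‖ := lΦ.le_opNorm zz
        _ ≤ 1 * ‖zz‖ := mul_le_mul_of_nonneg_right
            ((tM.lift_norm tM.T bb).trans hbb) (norm_nonneg zz)
        _ = ‖zz‖ := one_mul _
    have hopT : ((L₁.map fun pr => ((tM.tm.flip pr.2).comp (tM.act pr.1))).sum :
        tM.T →L[K] tM.T) = lΦ := by
      apply tM.ext_clm
      intro m c
      rw [list_sum_clm_apply, hlΦ_tm]
      have hΦc : Φ c = (L₁.map fun pr => pr.1 c • pr.2).sum := by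
        rw [hΦdef, list_sum_clm_apply, List.map_map]
        refine congrArg List.sum (List.map_congr_left fun pr _ => ?_)
        simp
      rw [hΦc, map_list_sum (tM.tm m : C →L[K] tM.T), List.map_map, List.map_map]
      refine congrArg List.sum (List.map_congr_left fun pr _ => ?_)
      show ((tM.tm.flip pr.2).comp (tM.act pr.1)) (tM.tm m c) = tM.tm m (pr.1 c • pr.2)
      rw [ContinuousLinearMap.comp_apply, tM.act_tm, ContinuousLinearMap.flip_apply,
        tM.tm_smul_left, map_smul]
    set w : tM.T := (L₁.map fun pr => tM.tm (tM.act pr.1 (ρM x)) pr.2).sum with hwdef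
    have hw_eq : w = lΦ (ρM x) := by
      rw [← hopT, list_sum_clm_apply, List.map_map, hwdef]
      refine congrArg List.sum (List.map_congr_left fun pr _ => ?_)
      show tM.tm (tM.act pr.1 (ρM x)) pr.2 = ((tM.tm.flip pr.2).comp (tM.act pr.1)) (ρM x)
      rw [ContinuousLinearMap.comp_apply, ContinuousLinearMap.flip_apply]
    refine ⟨w, ?_, ?_⟩
    · rw [SetLike.mem_coe, hwdef]
      refine list_sum_mem ?_
      intro el hel
      obtain ⟨pr, _, rfl⟩ := List.mem_map.1 hel
      exact Submodule.subset_span ⟨tM.act pr.1 (ρM x), hslice pr.1, pr.2, rfl⟩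
    · have hlu : lΦ u = (l.map fun p => tM.tm p.1 (Φ p.2)).sum := by
        rw [hul, map_list_sum (lΦ : tM.T →L[K] tM.T), List.map_map]
        exact congrArg List.sum (List.map_congr_left fun p _ => hlΦ_tm p.1 p.2)
      have hmid : ‖u - lΦ u‖ ≤ S1 * δ := by
        rw [hlu, hul]
        refine (norm_list_map_sub_le l _ _).trans ?_
        rw [hS1def, ← list_sum_map_mul_right]
        refine List.sum_le_sum ?_
        intro p hp
        have h4 : tM.tm p.1 p.2 - tM.tm p.1 (Φ p.2) = tM.tm p.1 (p.2 - Φ p.2) := by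
          rw [map_sub]
        rw [h4]
        refine (tM.tm_norm p.1 _).trans ?_
        refine mul_le_mul_of_nonneg_left ?_ (norm_nonneg p.1)
        rw [norm_sub_rev]
        exact hΦ2 p.2 (List.mem_map_of_mem (f := Prod.snd) hp)
      have hS1δ : S1 * δ ≤ r / 3 := by
        have heq3 : (1 + S1) * δ = r / 3 := by
          rw [hδdef]
          field_simp
        calc S1 * δ ≤ (1 + S1) * δ := mul_le_mul_of_nonneg_right (by linarith) hδ.le
          _ = r / 3 := heq3
      calc dist (ρM x) w ≤ dist (ρM x) u + dist u (lΦ u) + dist (lΦ u) w :=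
            dist_triangle4 _ _ _ _
        _ < r := by
            have e2 : dist u (lΦ u) ≤ S1 * δ := by
              rw [dist_eq_norm]
              exact hmid
            have e3 : dist (lΦ u) w < r / 3 := by
              rw [hw_eq, dist_eq_norm, ← map_sub]
              refine lt_of_le_of_lt (hlΦnorm _) ?_
              rw [← dist_eq_norm, dist_comm]
              exact hu_dist
            linarith
  have hbotclosed : IsClosed ((⊥ : Submodule K N) : Set N) := by
    rw [Submodule.bot_coe]
    exact isClosed_singleton
  have hbotco : ∀ y ∈ (⊥ : Submodule K N), ρN y ∈ tN.subTensor (⊥ : Submodule K N) := by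
    intro y hy
    rw [Submodule.mem_bot] at hy
    subst hy
    rw [map_zero]
    exact subset_closure (Submodule.zero_mem _)
  have hker := parta ⊥ hbotclosed hbotco
  have hkereq : LinearMap.ker (f : M →ₗ[K] N) = (⊥ : Submodule K N).comap (f : M →ₗ[K] N) := rfl
  refine ⟨parta, ⟨?_, ?_⟩, ?_⟩
  · rw [hkereq]
    exact hker.1
  · rw [hkereq]
    exact hker.2
  · intro y hy
    set SS : Submodule K tN.T := (Submodule.span K
        {w : tN.T | ∃ n ∈ (LinearMap.range (f : M →ₗ[K] N)).topologicalClosure, ∃ c : C, w = tN.tm n c}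
        ).topologicalClosure with hSS
    have hSSc : IsClosed (SS : Set tN.T) := Submodule.isClosed_topologicalClosure _
    have hAll : ∀ zz : tM.T, (tM.lift tN.T (tN.tm.comp f)) zz ∈ SS := by
      intro zz
      have hmem := tM.mem_all
        (Submodule.comap ((tM.lift tN.T (tN.tm.comp f)) : tM.T →ₗ[K] tN.T) SS)
        (hSSc.preimage (tM.lift tN.T (tN.tm.comp f)).continuous)
        (fun m c => by
          simp only [Submodule.mem_comap, ContinuousLinearMap.coe_coe]
          rw [hg_tm]
          exact Submodule.le_topologicalClosure _
            (Submodule.subset_span ⟨f m, Submodule.le_topologicalClosure _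
              (LinearMap.mem_range_self (f : M →ₗ[K] N) m), c, rfl⟩)) zz
      exact Submodule.mem_comap.1 hmem
    have hrange : LinearMap.range (f : M →ₗ[K] N) ≤ Submodule.comap (ρN : N →ₗ[K] tN.T) SS := by
      intro yy hyy
      obtain ⟨xx, rfl⟩ := LinearMap.mem_range.1 hyy
      simp only [Submodule.mem_comap, ContinuousLinearMap.coe_coe]
      rw [← hgρ xx]
      exact hAll (ρM xx)
    have hfin : (LinearMap.range (f : M →ₗ[K] N)).topologicalClosure ≤
        Submodule.comap (ρN : N →ₗ[K] tN.T) SS :=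
      Submodule.topologicalClosure_minimal _ hrange (hSSc.preimage ρN.continuous)
    have hmem2 := hfin hy
    rw [Submodule.mem_comap] at hmem2
    have hset : (SS : Set tN.T) = tN.subTensor (LinearMap.range (f : M →ₗ[K] N)).topologicalClosure :=
      Submodule.topologicalClosure_coe _
    rw [← hset]
    exact hmem2
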